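/- Let I be a nonempty finite set (the arcs into a node v), let ν_i > 0 be outflow capacities and b_i ∈ [0, ν_i] push rates for i ∈ I, and let Ω > 0 satisfy Σ_{i∈I} b_i ≥ Ω. Then: (1) there exists c ∈ (0,1] such that Σ_{i∈I} min{b_i, c·ν_i} = Ω, and the set of such c is compact, so it has a maximal element c*; (2) the family of outflow rates g_i = min{b_i, c·ν_i} is the same for every c ∈ (0,1] with Σ_{i∈I} min{b_i, c·ν_i} = Ω; in particular the outflow rates satisfying flow conservation (Σ_i g_i = Ω) and the fair allocation condition (g_i = min{b_i, c·ν_i} for some c ∈ (0,1]) are unique. -/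
import Mathlib


open Finset

/-- **Existence and uniqueness of fairly allocated outflow rates.**
Let `I` be the (nonempty, finite) set of arcs into a node, `ν i > 0` the outflow
capacities, `b i ∈ [0, ν i]` the push rates, and `Ω > 0` with `Σ b i ≥ Ω`.  Then
(1) some `c ∈ (0,1]` satisfies `Σ min(b i, c·ν i) = Ω`, the set of such `c` is
compact and has a maximal element; (2) the outflow rates `g i = min(b i, c·ν i)`
are the same for all such `c`; in particular the family of outflow rates
satisfying flow conservation and the fair allocation condition is unique. -/
theorem fair_allocation_exists_unique
    {I : Type} [Fintype I] [Nonempty I]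
    (ν b : I → ℝ) (hν : ∀ i, 0 < ν i) (hb : ∀ i, 0 ≤ b i ∧ b i ≤ ν i)
    (Ω : ℝ) (hΩ : 0 < Ω) (hsum : Ω ≤ ∑ i, b i) :
    ({c : ℝ | c ∈ Set.Ioc (0:ℝ) 1 ∧ (∑ i, min (b i) (c * ν i)) = Ω}.Nonempty ∧
     IsCompact {c : ℝ | c ∈ Set.Ioc (0:ℝ) 1 ∧ (∑ i, min (b i) (c * ν i)) = Ω} ∧
     ∃ cmax, IsGreatest {c : ℝ | c ∈ Set.Ioc (0:ℝ) 1 ∧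
        (∑ i, min (b i) (c * ν i)) = Ω} cmax) ∧
    (∀ c c', (c ∈ Set.Ioc (0:ℝ) 1 ∧ (∑ i, min (b i) (c * ν i)) = Ω) →
      (c' ∈ Set.Ioc (0:ℝ) 1 ∧ (∑ i, min (b i) (c' * ν i)) = Ω) →
      ∀ i, min (b i) (c * ν i) = min (b i) (c' * ν i)) ∧
    (∀ g g' : I → ℝ,
      ((∑ i, g i) = Ω ∧ ∃ c ∈ Set.Ioc (0:ℝ) 1, ∀ i, g i = min (b i) (c * ν i)) →
      ((∑ i, g' i) = Ω ∧ ∃ c ∈ Set.Ioc (0:ℝ) 1, ∀ i, g' i = min (b i) (c * ν i)) →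
      g = g') := by
  set F : ℝ → ℝ := fun c => ∑ i, min (b i) (c * ν i) with hF
  have hFcont : Continuous F := by
    apply continuous_finset_sum
    intro i _
    exact continuous_const.min ((continuous_id.mul continuous_const))
  have hF0 : F 0 = 0 := by
    simp only [hF, zero_mul]
    exact Finset.sum_eq_zero fun i _ => min_eq_right (hb i).1
  have hF1 : Ω ≤ F 1 := by
    simp only [hF, one_mul]
    calc Ω ≤ ∑ i, b i := hsum
    _ = ∑ i, min (b i) (ν i) := by
        exact Finset.sum_congr rfl fun i _ => (min_eq_left (hb i).2).symm
  -- the set equals a closed bounded set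
  set S := {c : ℝ | c ∈ Set.Ioc (0:ℝ) 1 ∧ F c = Ω} with hS
  have hSeq : S = Set.Icc (0:ℝ) 1 ∩ F ⁻¹' {Ω} := by
    ext c
    simp only [hS, Set.mem_setOf_eq, Set.mem_inter_iff, Set.mem_preimage,
      Set.mem_singleton_iff, Set.mem_Ioc, Set.mem_Icc]
    constructor
    · rintro ⟨⟨h1, h2⟩, h3⟩; exact ⟨⟨le_of_lt h1, h2⟩, h3⟩
    · rintro ⟨⟨h1, h2⟩, h3⟩
      refine ⟨⟨?_, h2⟩, h3⟩
      rcases h1.lt_or_eq with h | h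
      · exact h
      · exfalso; rw [← h, hF0] at h3; linarith
  have hmono : ∀ i, Monotone fun c => min (b i) (c * ν i) := fun i =>
    monotone_const.min (monotone_id.mul_const (hν i).le)
  have hne : S.Nonempty := by
    obtain ⟨c, hc, hcv⟩ := intermediate_value_Icc (le_of_lt one_pos) hFcont.continuousOn
      (Set.mem_Icc.mpr ⟨by linarith [hF0], hF1⟩)
    rw [hSeq]
    exact ⟨c, Set.mem_inter hc hcv⟩
  have hcomp : IsCompact S := by
    rw [hSeq]
    exact (isCompact_Icc).of_isClosed_subset
      (isClosed_Icc.inter (isClosed_singleton.preimage hFcont))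
      Set.inter_subset_left
  have huniq : ∀ c c', (c ∈ Set.Ioc (0:ℝ) 1 ∧ F c = Ω) →
      (c' ∈ Set.Ioc (0:ℝ) 1 ∧ F c' = Ω) →
      ∀ i, min (b i) (c * ν i) = min (b i) (c' * ν i) := by
    have key : ∀ c c', c ≤ c' → F c = Ω → F c' = Ω →
        ∀ i, min (b i) (c * ν i) = min (b i) (c' * ν i) := by
      intro c c' hle h h' i
      have hpt : ∀ j ∈ Finset.univ (α := I),
          min (b j) (c * ν j) ≤ min (b j) (c' * ν j) := fun j _ => hmono j hle
      have := (Finset.sum_eq_sum_iff_of_le hpt).1 (by show F c = F c'; rw [h, h'])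
      exact this i (Finset.mem_univ i)
    intro c c' h h' i
    rcases le_total c c' with hle | hle
    · exact key c c' hle h.2 h'.2 i
    · exact (key c' c hle h'.2 h.2 i).symm
  refine ⟨⟨hne, hcomp, hcomp.exists_isGreatest hne⟩, huniq, ?_⟩
  rintro g g' ⟨hg, c, hc, hgc⟩ ⟨hg', c', hc', hgc'⟩
  funext i
  rw [hgc i, hgc' i]
  refine huniq c c' ⟨hc, ?_⟩ ⟨hc', ?_⟩ i
  · rw [hF]; rw [← hg]; exact Finset.sum_congr rfl fun j _ => (hgc j).symm
  · rw [hF]; rw [← hg']; exact Finset.sum_congr rfl fun j _ => (hgc' j).symm
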